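/- arXiv:1610.07917 — 3 statements merged into one kernel-verified Lean document; each statement's English description precedes it below -/
import Mathlib

section
/- For every C¹ function μ : ℝ → ℝ that is 2L-periodic, one has ∫_{−L}^{L} μ(x)·N(η)ψ(x) dx = −∫_{−L}^{L}∫_{−h}^{η(x)} μ'(x)·φ_x(x,y)·φ_y(x,y) dy dx + (1/2)∫_{−L}^{L} μ(x)·φ_x(x,−h)² dx. -/
open Real Set MeasureTheory intervalIntegral

noncomputable section

/-- Horizontal derivative of the (time-independent) velocity potential. -/
def phiX (φ : ℝ → ℝ → ℝ) (x y : ℝ) : ℝ := deriv (fun x' => φ x' y) x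

/-- Vertical derivative of the (time-independent) velocity potential. -/
def phiY (φ : ℝ → ℝ → ℝ) (x y : ℝ) : ℝ := deriv (fun y' => φ x y') y

/-- The Dirichlet-to-Neumann expression `G(η)ψ` in the stationary setting. -/
def DN (η : ℝ → ℝ) (φ : ℝ → ℝ → ℝ) (x : ℝ) : ℝ :=
  phiY φ x (η x) - deriv η x * phiX φ x (η x)

/-- The quadratic expression `N(η)ψ` in the stationary setting. -/
def NOp (η : ℝ → ℝ) (φ : ℝ → ℝ → ℝ) (x : ℝ) : ℝ :=
  1/2 * (phiX φ x (η x))^2 - 1/2 * (phiY φ x (η x))^2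
    + deriv η x * phiX φ x (η x) * phiY φ x (η x)

namespace DivAux

variable {φ : ℝ → ℝ → ℝ}

def f1 (φ : ℝ → ℝ → ℝ) (p : ℝ × ℝ) : ℝ × ℝ →L[ℝ] ℝ := fderiv ℝ (Function.uncurry φ) p

def f2 (φ : ℝ → ℝ → ℝ) (p : ℝ × ℝ) : ℝ × ℝ →L[ℝ] ℝ × ℝ →L[ℝ] ℝ := fderiv ℝ (f1 φ) p

/-- `φ_x φ_y` as a function of the pair. -/
def Hf (φ : ℝ → ℝ → ℝ) (x y : ℝ) : ℝ := f1 φ (x, y) (1, 0) * f1 φ (x, y) (0, 1)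

/-- `∂_x (φ_x φ_y)`. -/
def W (φ : ℝ → ℝ → ℝ) (x y : ℝ) : ℝ :=
  f2 φ (x, y) (1, 0) (1, 0) * f1 φ (x, y) (0, 1)
    + f1 φ (x, y) (1, 0) * f2 φ (x, y) (1, 0) (0, 1)

variable (hφ : ContDiff ℝ 2 (Function.uncurry φ))
include hφ

lemma hf1d (p : ℝ × ℝ) : HasFDerivAt (Function.uncurry φ) (f1 φ p) p :=
  (hφ.differentiable (by norm_num) p).hasFDerivAt

lemma contDiff_f1 : ContDiff ℝ 1 (f1 φ) := hφ.fderiv_right (by norm_num)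

lemma hf2d (p : ℝ × ℝ) : HasFDerivAt (f1 φ) (f2 φ p) p :=
  ((contDiff_f1 hφ).differentiable (by norm_num) p).hasFDerivAt

lemma f2symm (p : ℝ × ℝ) (v w : ℝ × ℝ) : f2 φ p v w = f2 φ p w v :=
  second_derivative_symmetric (fun q => hf1d hφ q) (hf2d hφ p) v w

lemma cont_f1 : Continuous (f1 φ) := hφ.continuous_fderiv (by norm_num)

lemma cont_f2 : Continuous (f2 φ) := (contDiff_f1 hφ).continuous_fderiv (by norm_num)

lemma cont_f1v (v : ℝ × ℝ) : Continuous fun p => f1 φ p v :=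
  (cont_f1 hφ).clm_apply continuous_const

lemma cont_f2vw (v w : ℝ × ℝ) : Continuous fun p => f2 φ p v w :=
  ((cont_f2 hφ).clm_apply continuous_const).clm_apply continuous_const

lemma phiX_eq (x y : ℝ) : phiX φ x y = f1 φ (x, y) (1, 0) := by
  have hc : HasDerivAt (fun x' : ℝ => (x', y)) ((1:ℝ), (0:ℝ)) x :=
    (hasDerivAt_id x).prodMk (hasDerivAt_const x y)
  have h := (hf1d hφ (x, y)).comp_hasDerivAt x hc
  exact h.deriv

lemma phiY_eq (x y : ℝ) : phiY φ x y = f1 φ (x, y) (0, 1) := by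
  have hc : HasDerivAt (fun y' : ℝ => (x, y')) ((0:ℝ), (1:ℝ)) y :=
    (hasDerivAt_const y x).prodMk (hasDerivAt_id y)
  have h := (hf1d hφ (x, y)).comp_hasDerivAt y hc
  exact h.deriv

lemma hasDerivAt_f1v (v : ℝ × ℝ) {c : ℝ → ℝ × ℝ} {c' : ℝ × ℝ} {t : ℝ}
    (hc : HasDerivAt c c' t) :
    HasDerivAt (fun s => f1 φ (c s) v) (f2 φ (c t) c' v) t := by
  have h := (hf2d hφ (c t)).comp_hasDerivAt t hc
  have h2 := h.clm_apply (hasDerivAt_const t v)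
  simpa using h2

lemma hasDerivAt_f1v_x (v : ℝ × ℝ) (x y : ℝ) :
    HasDerivAt (fun x' => f1 φ (x', y) v) (f2 φ (x, y) (1, 0) v) x :=
  hasDerivAt_f1v hφ v ((hasDerivAt_id x).prodMk (hasDerivAt_const x y))

lemma hasDerivAt_f1v_y (v : ℝ × ℝ) (x y : ℝ) :
    HasDerivAt (fun y' => f1 φ (x, y') v) (f2 φ (x, y) (0, 1) v) y :=
  hasDerivAt_f1v hφ v ((hasDerivAt_const y x).prodMk (hasDerivAt_id y))

lemma hasDerivAt_Hf_x (x y : ℝ) :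
    HasDerivAt (fun x' => Hf φ x' y) (W φ x y) x :=
  (hasDerivAt_f1v_x hφ (1, 0) x y).mul (hasDerivAt_f1v_x hφ (0, 1) x y)

lemma cont_Hf : Continuous fun p : ℝ × ℝ => Hf φ p.1 p.2 := by
  have h1 := (cont_f1v hφ (1, 0)).comp (continuous_fst.prodMk continuous_snd)
  have h2 := (cont_f1v hφ (0, 1)).comp (continuous_fst.prodMk continuous_snd)
  exact h1.mul h2

lemma cont_W : Continuous fun p : ℝ × ℝ => W φ p.1 p.2 := by
  have h1 := (cont_f1v hφ (1, 0)).comp (continuous_fst.prodMk continuous_snd)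
  have h2 := (cont_f1v hφ (0, 1)).comp (continuous_fst.prodMk continuous_snd)
  have h3 := (cont_f2vw hφ (1, 0) (1, 0)).comp (continuous_fst.prodMk continuous_snd)
  have h4 := (cont_f2vw hφ (1, 0) (0, 1)).comp (continuous_fst.prodMk continuous_snd)
  exact (h3.mul h2).add (h1.mul h4)

lemma f1_per {L : ℝ} (hφper : ∀ x y, φ (x + 2*L) y = φ x y) (x y : ℝ) :
    f1 φ (x + 2*L, y) = f1 φ (x, y) := by
  have h1 : HasFDerivAt (fun q : ℝ × ℝ => Function.uncurry φ (q + (2*L, 0)))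
      (f1 φ ((x, y) + (2*L, 0))) (x, y) := by
    have := (hf1d hφ ((x, y) + (2*L, 0))).comp (x, y)
      ((hasFDerivAt_id (x, y)).add_const (2*L, 0))
    simpa [Function.comp_def] using this
  have h2 : (fun q : ℝ × ℝ => Function.uncurry φ (q + (2*L, 0))) = Function.uncurry φ := by
    funext q
    show φ (q.1 + 2*L) (q.2 + 0) = φ q.1 q.2
    rw [add_zero, hφper]
  rw [h2] at h1
  have := h1.fderiv
  simpa [f1, Prod.mk_add_mk] using this.symm

lemma Hf_per {L : ℝ} (hφper : ∀ x y, φ (x + 2*L) y = φ x y) (x y : ℝ) :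
    Hf φ (x + 2*L) y = Hf φ x y := by
  unfold Hf; rw [f1_per hφ hφper]

end DivAux

/-- the divergence identity for `N(η)ψ` (Lemma A.1 of the paper). -/
theorem divergence_identity
    (L h : ℝ) (hL : 0 < L) (hh : 0 < h)
    (η : ℝ → ℝ) (hη : ContDiff ℝ 2 η) (hηper : ∀ x, η (x + 2*L) = η x)
    (hηeven : ∀ x, η (-x) = η x) (hηlb : ∀ x, -h/2 ≤ η x)
    (φ : ℝ → ℝ → ℝ) (hφ : ContDiff ℝ 2 (Function.uncurry φ))
    (hφper : ∀ x y, φ (x + 2*L) y = φ x y) (hφeven : ∀ x y, φ (-x) y = φ x y)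
    (hharm : ∀ x y : ℝ, -h < y → y < η x →
        deriv (fun x' => phiX φ x' y) x + deriv (fun y' => phiY φ x y') y = 0)
    (hbot : ∀ x : ℝ, phiY φ x (-h) = 0)
    (μ : ℝ → ℝ) (hμ : ContDiff ℝ 1 μ) (hμper : ∀ x, μ (x + 2*L) = μ x) :
    (∫ x in (-L)..L, μ x * NOp η φ x)
    = -(∫ x in (-L)..L, ∫ y in (-h)..(η x), deriv μ x * phiX φ x y * phiY φ x y)
      + 1/2 * (∫ x in (-L)..L, μ x * (phiX φ x (-h))^2) := by
  have hlt : ∀ x, -h < η x := fun x => lt_of_lt_of_le (by linarith) (hηlb x)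
  have hηd : ∀ x, HasDerivAt η (deriv η x) x :=
    fun x => (hη.differentiable (by norm_num) x).hasDerivAt
  have contHf : Continuous fun p : ℝ × ℝ => DivAux.Hf φ p.1 p.2 := DivAux.cont_Hf hφ
  have contW : Continuous fun p : ℝ × ℝ => DivAux.W φ p.1 p.2 := DivAux.cont_W hφ
  have contHfy : ∀ x, Continuous fun y => DivAux.Hf φ x y :=
    fun x => contHf.comp (continuous_const.prodMk continuous_id)
  have contWy : ∀ x, Continuous fun y => DivAux.W φ x y :=
    fun x => contW.comp (continuous_const.prodMk continuous_id)
  have intHf : ∀ (x a b : ℝ), IntervalIntegrable (DivAux.Hf φ x) volume a b :=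
    fun x a b => (contHfy x).intervalIntegrable a b
  set F : ℝ → ℝ := fun x => ∫ y in (-h)..(η x), DivAux.Hf φ x y with hFdef
  -- harmonicity on the closed interval
  have harmc : ∀ x : ℝ, ∀ y ∈ Icc (-h) (η x),
      DivAux.f2 φ (x, y) (1, 0) (1, 0) + DivAux.f2 φ (x, y) (0, 1) (0, 1) = 0 := by
    intro x
    have hcont : Continuous fun y : ℝ =>
        DivAux.f2 φ (x, y) ((1:ℝ), (0:ℝ)) ((1:ℝ), (0:ℝ))
          + DivAux.f2 φ (x, y) ((0:ℝ), (1:ℝ)) ((0:ℝ), (1:ℝ)) :=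
      ((DivAux.cont_f2vw hφ _ _).comp (continuous_const.prodMk continuous_id)).add
        ((DivAux.cont_f2vw hφ _ _).comp (continuous_const.prodMk continuous_id))
    have heq : EqOn (fun y : ℝ =>
        DivAux.f2 φ (x, y) ((1:ℝ), (0:ℝ)) ((1:ℝ), (0:ℝ))
          + DivAux.f2 φ (x, y) ((0:ℝ), (1:ℝ)) ((0:ℝ), (1:ℝ)))
        (fun _ => (0:ℝ)) (Ioo (-h) (η x)) := by
      intro y hy
      have h0 := hharm x y hy.1 hy.2
      have e1 : (fun x' => phiX φ x' y) = fun x' => DivAux.f1 φ (x', y) (1, 0) :=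
        funext fun x' => DivAux.phiX_eq hφ x' y
      have e2 : (fun y' => phiY φ x y') = fun y' => DivAux.f1 φ (x, y') (0, 1) :=
        funext fun y' => DivAux.phiY_eq hφ x y'
      rw [e1, e2, (DivAux.hasDerivAt_f1v_x hφ (1, 0) x y).deriv,
        (DivAux.hasDerivAt_f1v_y hφ (0, 1) x y).deriv] at h0
      exact h0
    have hcl := heq.closure hcont continuous_const
    intro y hy
    have hy' : y ∈ closure (Ioo (-h) (η x)) := by
      rw [closure_Ioo (hlt x).ne]; exact hy
    exact hcl hy'
  -- the inner fundamental theorem of calculus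
  have innerFTC : ∀ x : ℝ, (∫ y in (-h)..(η x), DivAux.W φ x y)
      = (1/2 * (DivAux.f1 φ (x, η x) (1, 0))^2 - 1/2 * (DivAux.f1 φ (x, η x) (0, 1))^2)
        - 1/2 * (DivAux.f1 φ (x, -h) (1, 0))^2 := by
    intro x
    have hbot' : DivAux.f1 φ (x, -h) ((0:ℝ), (1:ℝ)) = 0 := by
      have := hbot x
      rwa [DivAux.phiY_eq hφ] at this
    have hg : ∀ y ∈ uIcc (-h) (η x), HasDerivAt
        (fun y' => 1/2 * (DivAux.f1 φ (x, y') (1, 0))^2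
          - 1/2 * (DivAux.f1 φ (x, y') (0, 1))^2) (DivAux.W φ x y) y := by
      intro y hy
      have hy' : y ∈ Icc (-h) (η x) := by rwa [uIcc_of_le (hlt x).le] at hy
      have h1 := DivAux.hasDerivAt_f1v_y hφ (1, 0) x y
      have h2 := DivAux.hasDerivAt_f1v_y hφ (0, 1) x y
      have h := ((h1.pow 2).const_mul (1/2 : ℝ)).sub ((h2.pow 2).const_mul (1/2 : ℝ))
      refine h.congr_deriv ?_
      symm
      have hsym := DivAux.f2symm hφ (x, y) ((0:ℝ), (1:ℝ)) ((1:ℝ), (0:ℝ))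
      have hhc := harmc x y hy'
      unfold DivAux.W
      push_cast
      linear_combination ((DivAux.f1 φ (x, y)) (0, 1)) * hhc
        - ((DivAux.f1 φ (x, y)) (1, 0)) * hsym
    rw [intervalIntegral.integral_eq_sub_of_hasDerivAt hg ((contWy x).intervalIntegrable _ _)]
    rw [hbot']
    ring
  -- the derivative of F
  have hFderiv : ∀ x₀ : ℝ, HasDerivAt F
      ((∫ y in (-h)..(η x₀), DivAux.W φ x₀ y) + deriv η x₀ * DivAux.Hf φ x₀ (η x₀)) x₀ := by
    intro x₀
    obtain ⟨C, hC⟩ := ((isCompact_closedBall x₀ 1).prod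
      (isCompact_uIcc (a := -h) (b := η x₀))).exists_bound_of_continuousOn contW.continuousOn
    have hA : HasDerivAt (fun x => ∫ y in (-h)..(η x₀), DivAux.Hf φ x y)
        (∫ y in (-h)..(η x₀), DivAux.W φ x₀ y) x₀ := by
      refine (intervalIntegral.hasDerivAt_integral_of_dominated_loc_of_deriv_le
        (F := DivAux.Hf φ) (F' := DivAux.W φ) (bound := fun _ => C)
        (Metric.ball_mem_nhds x₀ one_pos) (Filter.Eventually.of_forall fun x => (contHfy x).aestronglyMeasurable)
        (intHf x₀ _ _) ((contWy x₀).aestronglyMeasurable)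
        (MeasureTheory.ae_of_all _ fun t ht x hx => ?_)
        intervalIntegrable_const
        (MeasureTheory.ae_of_all _ fun t ht x hx => DivAux.hasDerivAt_Hf_x hφ x t)).2
      exact hC (x, t) (Set.mem_prod.mpr ⟨Metric.ball_subset_closedBall hx, uIoc_subset_uIcc ht⟩)
    set b₀ := η x₀ with hb₀
    set Rf : ℝ × ℝ → ℝ := fun p => ∫ y in b₀..p.2, DivAux.Hf φ p.1 y with hRf
    set Lm : ℝ × ℝ →L[ℝ] ℝ := DivAux.Hf φ x₀ b₀ • (ContinuousLinearMap.snd ℝ ℝ ℝ) with hLm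
    have hR : HasFDerivAt Rf Lm (x₀, b₀) := by
      rw [hasFDerivAt_iff_isLittleO, Asymptotics.isLittleO_iff]
      intro c hc
      obtain ⟨δ, hδ0, hδ⟩ := Metric.continuousAt_iff.1 contHf.continuousAt c hc
      filter_upwards [Metric.ball_mem_nhds (x₀, b₀) hδ0] with p hp
      have hRe : Rf p - Rf (x₀, b₀) - Lm (p - (x₀, b₀))
          = ∫ y in b₀..p.2, (DivAux.Hf φ p.1 y - DivAux.Hf φ x₀ b₀) := by
        rw [intervalIntegral.integral_sub (intHf _ _ _) intervalIntegrable_const,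
          intervalIntegral.integral_const]
        simp only [hRf, hLm, ContinuousLinearMap.smul_apply, ContinuousLinearMap.coe_snd',
          smul_eq_mul, Prod.snd_sub, intervalIntegral.integral_same]
        ring
      rw [hRe]
      have hb : ∀ y ∈ Set.uIoc b₀ p.2, ‖DivAux.Hf φ p.1 y - DivAux.Hf φ x₀ b₀‖ ≤ c := by
        intro y hy
        have hy' : y ∈ uIcc b₀ p.2 := uIoc_subset_uIcc hy
        have h2 : |y - b₀| ≤ |p.2 - b₀| := by
          rw [abs_sub_le_iff]
          rcases Set.mem_uIcc.mp hy' with ⟨ha, hb⟩ | ⟨ha, hb⟩ <;> constructor <;>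
            rcases abs_cases (p.2 - b₀) with ⟨hh1, hh2⟩ | ⟨hh1, hh2⟩ <;> linarith
        have hdp : dist (p.1, y) (x₀, b₀) < δ := by
          rw [Prod.dist_eq]
          have hd1 : dist p.1 x₀ ≤ dist p (x₀, b₀) := by
            rw [Prod.dist_eq]; exact le_max_left _ _
          have hd2 : dist y b₀ ≤ dist p (x₀, b₀) := by
            rw [Prod.dist_eq]
            refine le_trans ?_ (le_max_right _ _)
            rw [Real.dist_eq, Real.dist_eq]
            exact h2
          have hplt : dist p (x₀, b₀) < δ := hp
          exact lt_of_le_of_lt (max_le hd1 hd2) hplt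
        have := hδ hdp
        rw [Real.dist_eq] at this
        exact le_of_lt this
      calc ‖∫ y in b₀..p.2, (DivAux.Hf φ p.1 y - DivAux.Hf φ x₀ b₀)‖
          ≤ c * |p.2 - b₀| := intervalIntegral.norm_integral_le_of_norm_le_const hb
        _ ≤ c * ‖p - (x₀, b₀)‖ := by
            refine mul_le_mul_of_nonneg_left ?_ hc.le
            have : |p.2 - b₀| = ‖(p - (x₀, b₀)).2‖ := by simp [Prod.snd_sub]
            rw [this]
            exact le_trans (by rw [Prod.norm_def]; exact le_max_right _ _) le_rfl
    have hcurve : HasDerivAt (fun x => (x, η x)) ((1:ℝ), deriv η x₀) x₀ :=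
      (hasDerivAt_id x₀).prodMk (hηd x₀)
    have hB : HasDerivAt (fun x => Rf (x, η x)) (deriv η x₀ * DivAux.Hf φ x₀ b₀) x₀ := by
      have hcomp := hR.comp_hasDerivAt x₀ hcurve
      refine hcomp.congr_deriv ?_
      symm
      simp [hLm, smul_eq_mul]
      ring
    have hFeq : F = fun x => (∫ y in (-h)..b₀, DivAux.Hf φ x y) + Rf (x, η x) := by
      funext x
      show (∫ y in (-h)..(η x), DivAux.Hf φ x y) = _
      rw [hRf]
      rw [← intervalIntegral.integral_add_adjacent_intervals (intHf x (-h) b₀)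
        (intHf x b₀ (η x))]
    rw [hFeq]
    exact hA.add hB
  have contF : Continuous F := continuous_iff_continuousAt.2 fun x => (hFderiv x).continuousAt
  set NOpf : ℝ → ℝ := fun x =>
    1/2 * (DivAux.f1 φ (x, η x) (1, 0))^2 - 1/2 * (DivAux.f1 φ (x, η x) (0, 1))^2
      + deriv η x * DivAux.f1 φ (x, η x) (1, 0) * DivAux.f1 φ (x, η x) (0, 1) with hNOpf
  set pXh : ℝ → ℝ := fun x => DivAux.f1 φ (x, -h) (1, 0) with hpXh
  set D : ℝ → ℝ := fun x =>
    deriv μ x * F x + (μ x * NOpf x - 1/2 * (μ x * (pXh x)^2)) with hD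
  have contcomp : ∀ (g : ℝ → ℝ), Continuous g → ∀ (v : ℝ × ℝ),
      Continuous fun x => DivAux.f1 φ (x, g x) v :=
    fun g hg v => (DivAux.cont_f1v hφ v).comp (continuous_id.prodMk hg)
  have hΦd : ∀ x, HasDerivAt (fun x => μ x * F x) (D x) x := by
    intro x
    have hμd : HasDerivAt μ (deriv μ x) x := (hμ.differentiable (by norm_num) x).hasDerivAt
    have hm := hμd.mul (hFderiv x)
    refine hm.congr_deriv ?_
    symm
    rw [innerFTC x]
    simp only [hD, hNOpf, hpXh, DivAux.Hf]
    ring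
  have contNOpf : Continuous NOpf := by
    rw [hNOpf]
    exact ((continuous_const.mul ((contcomp η hη.continuous (1, 0)).pow 2)).sub
      (continuous_const.mul ((contcomp η hη.continuous (0, 1)).pow 2))).add
      (((hη.continuous_deriv one_le_two).mul (contcomp η hη.continuous (1, 0))).mul
        (contcomp η hη.continuous (0, 1)))
  have contpXh : Continuous pXh := by
    rw [hpXh]; exact contcomp _ continuous_const _
  have contD : Continuous D := by
    rw [hD]
    exact ((hμ.continuous_deriv le_rfl).mul contF).add
      ((hμ.continuous.mul contNOpf).sub
        (continuous_const.mul (hμ.continuous.mul (contpXh.pow 2))))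
  have key : (∫ x in (-L)..L, D x) = μ L * F L - μ (-L) * F (-L) :=
    intervalIntegral.integral_eq_sub_of_hasDerivAt (fun x _ => hΦd x)
      (contD.intervalIntegrable _ _)
  have hμL : μ L = μ (-L) := by
    have := hμper (-L)
    rwa [show -L + 2*L = L by ring] at this
  have hFL : F L = F (-L) := by
    have h1 : F (-L + 2*L) = F (-L) := by
      show (∫ y in (-h)..(η (-L + 2*L)), DivAux.Hf φ (-L + 2*L) y)
        = ∫ y in (-h)..(η (-L)), DivAux.Hf φ (-L) y
      rw [hηper (-L)]
      exact intervalIntegral.integral_congr fun y _ => DivAux.Hf_per hφ hφper (-L) y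
    rwa [show -L + 2*L = L by ring] at h1
  have key0 : (∫ x in (-L)..L, D x) = 0 := by rw [key, hμL, hFL]; ring
  have intA : IntervalIntegrable (fun x => deriv μ x * F x) volume (-L) L :=
    ((hμ.continuous_deriv le_rfl).mul contF).intervalIntegrable _ _
  have intB : IntervalIntegrable (fun x => μ x * NOpf x) volume (-L) L :=
    (hμ.continuous.mul contNOpf).intervalIntegrable _ _
  have intC : IntervalIntegrable (fun x => 1/2 * (μ x * (pXh x)^2)) volume (-L) L :=
    (continuous_const.mul (hμ.continuous.mul (contpXh.pow 2))).intervalIntegrable _ _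
  have hsplit : (∫ x in (-L)..L, D x)
      = (∫ x in (-L)..L, deriv μ x * F x)
        + ((∫ x in (-L)..L, μ x * NOpf x) - ∫ x in (-L)..L, 1/2 * (μ x * (pXh x)^2)) := by
    rw [hD]
    rw [intervalIntegral.integral_add intA (intB.sub intC),
      intervalIntegral.integral_sub intB intC]
  have e1 : ∀ x, (∫ y in (-h)..(η x), deriv μ x * phiX φ x y * phiY φ x y)
      = deriv μ x * F x := by
    intro x
    have h1 : (∫ y in (-h)..(η x), deriv μ x * phiX φ x y * phiY φ x y)
        = ∫ y in (-h)..(η x), deriv μ x * DivAux.Hf φ x y :=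
      intervalIntegral.integral_congr fun y _ => by
        rw [DivAux.phiX_eq hφ, DivAux.phiY_eq hφ]
        simp only [DivAux.Hf]
        ring
    rw [h1, intervalIntegral.integral_const_mul]
  have eg1 : (∫ x in (-L)..L, μ x * NOp η φ x) = ∫ x in (-L)..L, μ x * NOpf x :=
    intervalIntegral.integral_congr fun x _ => by
      simp only [NOp, DivAux.phiX_eq hφ, DivAux.phiY_eq hφ, hNOpf]
  have eg2 : (∫ x in (-L)..L, ∫ y in (-h)..(η x), deriv μ x * phiX φ x y * phiY φ x y)
      = ∫ x in (-L)..L, deriv μ x * F x :=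
    intervalIntegral.integral_congr fun x _ => e1 x
  have eg3 : (∫ x in (-L)..L, μ x * (phiX φ x (-h))^2)
      = ∫ x in (-L)..L, μ x * (pXh x)^2 :=
    intervalIntegral.integral_congr fun x _ => by
      rw [DivAux.phiX_eq hφ, hpXh]
  have e2 : (∫ x in (-L)..L, 1/2 * (μ x * (pXh x)^2))
      = 1/2 * ∫ x in (-L)..L, μ x * (pXh x)^2 :=
    intervalIntegral.integral_const_mul _ _
  rw [eg1, eg2, eg3]
  rw [hsplit, e2] at key0
  linarith [key0]
end
end

section
/- Set V(x) = φ_x(x,η(x)), G(η)ψ(x) = φ_y(x,η(x)) − η'(x)φ_x(x,η(x)). Then for every C¹ 2L-periodic function χ : ℝ → ℝ, one has ∫_{−L}^{L} χ(x)·(1 + η'(x)²)·V(x)² dx = ∫_{−L}^{L} χ(x)·(G(η)ψ(x))² dx + ∫_{−L}^{L} χ(x)·φ_x(x,−h)² dx − 2∫_{−L}^{L}∫_{−h}^{η(x)} χ'(x)·φ_x(x,y)·φ_y(x,y) dy dx. -/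
open Real Set MeasureTheory intervalIntegral

noncomputable section

namespace TraceAux

variable {φ : ℝ → ℝ → ℝ}

def p1 (φ : ℝ → ℝ → ℝ) (z : ℝ × ℝ) : ℝ := fderiv ℝ (Function.uncurry φ) z (1, 0)
def p2 (φ : ℝ → ℝ → ℝ) (z : ℝ × ℝ) : ℝ := fderiv ℝ (Function.uncurry φ) z (0, 1)
def q (φ : ℝ → ℝ → ℝ) (w v z : ℝ × ℝ) : ℝ := fderiv ℝ (fderiv ℝ (Function.uncurry φ)) z w v
def gg (φ : ℝ → ℝ → ℝ) (z : ℝ × ℝ) : ℝ := p1 φ z * p2 φ z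
def PP (φ : ℝ → ℝ → ℝ) (z : ℝ × ℝ) : ℝ := (p1 φ z * p1 φ z - p2 φ z * p2 φ z) / 2
def ggx (φ : ℝ → ℝ → ℝ) (z : ℝ × ℝ) : ℝ :=
  q φ (1,0) (1,0) z * p2 φ z + p1 φ z * q φ (1,0) (0,1) z
def ggy (φ : ℝ → ℝ → ℝ) (z : ℝ × ℝ) : ℝ :=
  q φ (0,1) (1,0) z * p2 φ z + p1 φ z * q φ (0,1) (0,1) z
def ppx (φ : ℝ → ℝ → ℝ) (z : ℝ × ℝ) : ℝ :=
  p1 φ z * q φ (1,0) (1,0) z - p2 φ z * q φ (1,0) (0,1) z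
def ppy (φ : ℝ → ℝ → ℝ) (z : ℝ × ℝ) : ℝ :=
  p1 φ z * q φ (0,1) (1,0) z - p2 φ z * q φ (0,1) (0,1) z

theorem fderiv_contDiff (hφ : ContDiff ℝ 2 (Function.uncurry φ)) :
    ContDiff ℝ 1 (fderiv ℝ (Function.uncurry φ)) :=
  hφ.fderiv_right (by norm_num)

theorem hasDerivAt_p_comp (hφ : ContDiff ℝ 2 (Function.uncurry φ)) (v : ℝ × ℝ)
    {γ : ℝ → ℝ × ℝ} {s : ℝ} {γ' : ℝ × ℝ} (hγ : HasDerivAt γ γ' s) :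
    HasDerivAt (fun s => fderiv ℝ (Function.uncurry φ) (γ s) v)
      (q φ (1,0) v (γ s) * γ'.1 + q φ (0,1) v (γ s) * γ'.2) s := by
  have hd : HasFDerivAt (fun z => fderiv ℝ (Function.uncurry φ) z v)
      ((ContinuousLinearMap.apply ℝ ℝ v).comp
        (fderiv ℝ (fderiv ℝ (Function.uncurry φ)) (γ s))) (γ s) :=
    ((ContinuousLinearMap.apply ℝ ℝ v).hasFDerivAt).comp (γ s)
      (((fderiv_contDiff hφ).differentiable one_ne_zero (γ s)).hasFDerivAt)
  have h := hd.comp_hasDerivAt s hγ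
  refine h.congr_deriv (Eq.symm ?_)
  obtain ⟨a, b⟩ := γ'
  have hab : ((a, b) : ℝ × ℝ) = a • ((1:ℝ),(0:ℝ)) + b • ((0:ℝ),(1:ℝ)) := by
    simp [Prod.ext_iff]
  rw [ContinuousLinearMap.comp_apply, hab, map_add, _root_.map_smul, _root_.map_smul]
  simp [q, mul_comm]

theorem hasDerivAt_p1_comp (hφ : ContDiff ℝ 2 (Function.uncurry φ))
    {γ : ℝ → ℝ × ℝ} {s : ℝ} {γ' : ℝ × ℝ} (hγ : HasDerivAt γ γ' s) :
    HasDerivAt (fun s => p1 φ (γ s))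
      (q φ (1,0) (1,0) (γ s) * γ'.1 + q φ (0,1) (1,0) (γ s) * γ'.2) s :=
  hasDerivAt_p_comp hφ (1,0) hγ

theorem hasDerivAt_p2_comp (hφ : ContDiff ℝ 2 (Function.uncurry φ))
    {γ : ℝ → ℝ × ℝ} {s : ℝ} {γ' : ℝ × ℝ} (hγ : HasDerivAt γ γ' s) :
    HasDerivAt (fun s => p2 φ (γ s))
      (q φ (1,0) (0,1) (γ s) * γ'.1 + q φ (0,1) (0,1) (γ s) * γ'.2) s :=
  hasDerivAt_p_comp hφ (0,1) hγ

theorem hasDerivAt_gg_comp (hφ : ContDiff ℝ 2 (Function.uncurry φ))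
    {γ : ℝ → ℝ × ℝ} {s : ℝ} {γ' : ℝ × ℝ} (hγ : HasDerivAt γ γ' s) :
    HasDerivAt (fun s => gg φ (γ s))
      (ggx φ (γ s) * γ'.1 + ggy φ (γ s) * γ'.2) s := by
  have h := (hasDerivAt_p1_comp hφ hγ).mul (hasDerivAt_p2_comp hφ hγ)
  refine h.congr_deriv (Eq.symm ?_)
  simp only [ggx, ggy, gg]
  ring

theorem hasDerivAt_PP_comp (hφ : ContDiff ℝ 2 (Function.uncurry φ))
    {γ : ℝ → ℝ × ℝ} {s : ℝ} {γ' : ℝ × ℝ} (hγ : HasDerivAt γ γ' s) :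
    HasDerivAt (fun s => PP φ (γ s))
      (ppx φ (γ s) * γ'.1 + ppy φ (γ s) * γ'.2) s := by
  have h1 := (hasDerivAt_p1_comp hφ hγ).mul (hasDerivAt_p1_comp hφ hγ)
  have h2 := (hasDerivAt_p2_comp hφ hγ).mul (hasDerivAt_p2_comp hφ hγ)
  have h := (h1.sub h2).div_const 2
  refine h.congr_deriv (Eq.symm ?_)
  simp only [ppx, ppy, PP]
  ring

theorem cont_p1 (hφ : ContDiff ℝ 2 (Function.uncurry φ)) : Continuous (p1 φ) :=
  ((fderiv_contDiff hφ).continuous).clm_apply continuous_const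

theorem cont_p2 (hφ : ContDiff ℝ 2 (Function.uncurry φ)) : Continuous (p2 φ) :=
  ((fderiv_contDiff hφ).continuous).clm_apply continuous_const

theorem cont_q (hφ : ContDiff ℝ 2 (Function.uncurry φ)) (w v : ℝ × ℝ) :
    Continuous (q φ w v) :=
  ((((fderiv_contDiff hφ).continuous_fderiv one_ne_zero).clm_apply continuous_const).clm_apply
    continuous_const)

theorem cont_gg (hφ : ContDiff ℝ 2 (Function.uncurry φ)) : Continuous (gg φ) :=
  (cont_p1 hφ).mul (cont_p2 hφ)

theorem cont_PP (hφ : ContDiff ℝ 2 (Function.uncurry φ)) : Continuous (PP φ) :=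
  (((cont_p1 hφ).mul (cont_p1 hφ)).sub ((cont_p2 hφ).mul (cont_p2 hφ))).div_const 2

theorem cont_ggx (hφ : ContDiff ℝ 2 (Function.uncurry φ)) : Continuous (ggx φ) :=
  ((cont_q hφ _ _).mul (cont_p2 hφ)).add ((cont_p1 hφ).mul (cont_q hφ _ _))

theorem cont_ggy (hφ : ContDiff ℝ 2 (Function.uncurry φ)) : Continuous (ggy φ) :=
  ((cont_q hφ _ _).mul (cont_p2 hφ)).add ((cont_p1 hφ).mul (cont_q hφ _ _))

theorem q_symm (hφ : ContDiff ℝ 2 (Function.uncurry φ)) (z : ℝ × ℝ) :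
    q φ (0,1) (1,0) z = q φ (1,0) (0,1) z :=
  (hφ.contDiffAt.isSymmSndFDerivAt (by simp)) _ _

theorem phiX_eq (hφ : ContDiff ℝ 2 (Function.uncurry φ)) (x y : ℝ) :
    (deriv (fun x' => φ x' y) x) = p1 φ (x, y) := by
  have hc : HasDerivAt (fun x' => ((x', y) : ℝ × ℝ)) ((1:ℝ), (0:ℝ)) x :=
    (hasDerivAt_id x).prodMk (hasDerivAt_const x y)
  have h := ((hφ.differentiable two_ne_zero) ((x, y) : ℝ × ℝ)).hasFDerivAt.comp_hasDerivAt x hc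
  exact h.deriv

theorem phiY_eq (hφ : ContDiff ℝ 2 (Function.uncurry φ)) (x y : ℝ) :
    (deriv (fun y' => φ x y') y) = p2 φ (x, y) := by
  have hc : HasDerivAt (fun y' => ((x, y') : ℝ × ℝ)) ((0:ℝ), (1:ℝ)) y :=
    (hasDerivAt_const y x).prodMk (hasDerivAt_id y)
  have h := ((hφ.differentiable two_ne_zero) ((x, y) : ℝ × ℝ)).hasFDerivAt.comp_hasDerivAt y hc
  exact h.deriv

theorem deriv_p1_x (hφ : ContDiff ℝ 2 (Function.uncurry φ)) (x y : ℝ) :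
    deriv (fun x' => p1 φ (x', y)) x = q φ (1,0) (1,0) (x, y) := by
  have hc : HasDerivAt (fun x' => ((x', y) : ℝ × ℝ)) ((1:ℝ), (0:ℝ)) x :=
    (hasDerivAt_id x).prodMk (hasDerivAt_const x y)
  have h := (hasDerivAt_p1_comp hφ hc).deriv
  simpa using h

theorem deriv_p2_y (hφ : ContDiff ℝ 2 (Function.uncurry φ)) (x y : ℝ) :
    deriv (fun y' => p2 φ (x, y')) y = q φ (0,1) (0,1) (x, y) := by
  have hc : HasDerivAt (fun y' => ((x, y') : ℝ × ℝ)) ((0:ℝ), (1:ℝ)) y :=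
    (hasDerivAt_const y x).prodMk (hasDerivAt_id y)
  have h := (hasDerivAt_p2_comp hφ hc).deriv
  simpa using h

def mfun (η : ℝ → ℝ) (h x t : ℝ) : ℝ := (η x + h) * t + (-h)

def Gfun (η : ℝ → ℝ) (h : ℝ) (φ : ℝ → ℝ → ℝ) (x t : ℝ) : ℝ :=
  (η x + h) * gg φ (x, mfun η h x t)

def GxF (η : ℝ → ℝ) (h : ℝ) (φ : ℝ → ℝ → ℝ) (x t : ℝ) : ℝ :=
  deriv η x * gg φ (x, mfun η h x t)
    + (η x + h) * (ggx φ (x, mfun η h x t) * 1 + ggy φ (x, mfun η h x t) * (deriv η x * t))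

theorem hasDerivAt_G (hφ : ContDiff ℝ 2 (Function.uncurry φ)) {η : ℝ → ℝ}
    (hη : Differentiable ℝ η) (h t x : ℝ) :
    HasDerivAt (fun x' => Gfun η h φ x' t) (GxF η h φ x t) x := by
  have hm : HasDerivAt (fun x' => mfun η h x' t) (deriv η x * t) x :=
    (((hη x).hasDerivAt.add_const h).mul_const t).add_const (-h)
  have hγ : HasDerivAt (fun x' => ((x', mfun η h x' t) : ℝ × ℝ)) ((1:ℝ), deriv η x * t) x :=
    (hasDerivAt_id x).prodMk hm
  exact ((hη x).hasDerivAt.add_const h).mul (hasDerivAt_gg_comp hφ hγ)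

theorem cont_Gx (hφ : ContDiff ℝ 2 (Function.uncurry φ)) {η : ℝ → ℝ}
    (hηc : Continuous η) (hη' : Continuous (deriv η)) (h : ℝ) :
    Continuous (fun p : ℝ × ℝ => GxF η h φ p.1 p.2) := by
  have hmc : Continuous (fun p : ℝ × ℝ => ((p.1, mfun η h p.1 p.2) : ℝ × ℝ)) :=
    continuous_fst.prodMk
      ((((hηc.comp continuous_fst).add continuous_const).mul continuous_snd).add
        continuous_const)
  exact ((hη'.comp continuous_fst).mul ((cont_gg hφ).comp hmc)).add
    (((hηc.comp continuous_fst).add continuous_const).mul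
      ((((cont_ggx hφ).comp hmc).mul continuous_const).add
        (((cont_ggy hφ).comp hmc).mul ((hη'.comp continuous_fst).mul continuous_snd))))

theorem cont_G (hφ : ContDiff ℝ 2 (Function.uncurry φ)) {η : ℝ → ℝ}
    (hηc : Continuous η) (h : ℝ) :
    Continuous (fun p : ℝ × ℝ => Gfun η h φ p.1 p.2) := by
  have hmc : Continuous (fun p : ℝ × ℝ => ((p.1, mfun η h p.1 p.2) : ℝ × ℝ)) :=
    continuous_fst.prodMk
      ((((hηc.comp continuous_fst).add continuous_const).mul continuous_snd).add
        continuous_const)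
  exact ((hηc.comp continuous_fst).add continuous_const).mul ((cont_gg hφ).comp hmc)

end TraceAux

/-- the identity for the horizontal trace velocity (identity (d10) of the paper). -/
theorem trace_velocity_identity
    (L h : ℝ) (hL : 0 < L) (hh : 0 < h)
    (η : ℝ → ℝ) (hη : ContDiff ℝ 2 η) (hηper : ∀ x, η (x + 2*L) = η x)
    (hηeven : ∀ x, η (-x) = η x) (hηlb : ∀ x, -h/2 ≤ η x)
    (φ : ℝ → ℝ → ℝ) (hφ : ContDiff ℝ 2 (Function.uncurry φ))
    (hφper : ∀ x y, φ (x + 2*L) y = φ x y) (hφeven : ∀ x y, φ (-x) y = φ x y)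
    (hharm : ∀ x y : ℝ, -h < y → y < η x →
        deriv (fun x' => phiX φ x' y) x + deriv (fun y' => phiY φ x y') y = 0)
    (hbot : ∀ x : ℝ, phiY φ x (-h) = 0)
    (χ : ℝ → ℝ) (hχ : ContDiff ℝ 1 χ) (hχper : ∀ x, χ (x + 2*L) = χ x)
    (V : ℝ → ℝ) (hV : ∀ x, V x = phiX φ x (η x)) :
    (∫ x in (-L)..L, χ x * (1 + (deriv η x)^2) * (V x)^2)
    = (∫ x in (-L)..L, χ x * (DN η φ x)^2)
      + (∫ x in (-L)..L, χ x * (phiX φ x (-h))^2)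
      - 2 * (∫ x in (-L)..L, ∫ y in (-h)..(η x), deriv χ x * phiX φ x y * phiY φ x y) := by
  have hpx : ∀ x y, phiX φ x y = TraceAux.p1 φ (x, y) := fun x y => TraceAux.phiX_eq hφ x y
  have hpy : ∀ x y, phiY φ x y = TraceAux.p2 φ (x, y) := fun x y => TraceAux.phiY_eq hφ x y
  have hηd : Differentiable ℝ η := hη.differentiable two_ne_zero
  have hηc : Continuous η := hη.continuous
  have hη' : Continuous (deriv η) := hη.continuous_deriv one_le_two
  have hχ' : Continuous (deriv χ) := hχ.continuous_deriv le_rfl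
  have hχc : Continuous χ := hχ.continuous
  have hp1c := TraceAux.cont_p1 hφ
  have hp2c := TraceAux.cont_p2 hφ
  have hggc := TraceAux.cont_gg hφ
  have hPPc := TraceAux.cont_PP hφ
  have hepos : ∀ x, 0 < η x + h := fun x => by have := hηlb x; linarith
  have hcurveη : Continuous (fun x => ((x, η x) : ℝ × ℝ)) := continuous_id.prodMk hηc
  -- harmonicity in second-derivative form
  have hharmq : ∀ x y, -h < y → y < η x →
      TraceAux.q φ (0,1) (0,1) (x,y) = - TraceAux.q φ (1,0) (1,0) (x,y) := by
    intro x y h1 h2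
    have h0 := hharm x y h1 h2
    have e1 : (fun x' => phiX φ x' y) = fun x' => TraceAux.p1 φ (x', y) :=
      funext fun x' => hpx x' y
    have e2 : (fun y' => phiY φ x y') = fun y' => TraceAux.p2 φ (x, y') :=
      funext fun y' => hpy x y'
    rw [e1, e2, TraceAux.deriv_p1_x hφ, TraceAux.deriv_p2_y hφ] at h0
    linarith
  -- substitution to a fixed t-interval
  have hsub : ∀ x, (∫ y in (-h)..(η x), TraceAux.gg φ (x, y))
      = ∫ t in (0:ℝ)..1, TraceAux.Gfun η h φ x t := by
    intro x
    have hne : η x + h ≠ 0 := ne_of_gt (hepos x)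
    have h0 := intervalIntegral.integral_comp_mul_add (a := (0:ℝ)) (b := 1)
      (fun y => TraceAux.gg φ (x, y)) hne (-h)
    have e0 : (η x + h) * 0 + -h = -h := by ring
    have e1 : (η x + h) * 1 + -h = η x := by ring
    rw [e0, e1] at h0
    unfold TraceAux.Gfun TraceAux.mfun
    rw [intervalIntegral.integral_const_mul, h0, smul_eq_mul, ← mul_assoc,
      mul_inv_cancel₀ hne, one_mul]
  -- FTC in t
  have hFTC : ∀ x, (∫ t in (0:ℝ)..1, TraceAux.GxF η h φ x t)
      = TraceAux.PP φ (x, η x) + deriv η x * TraceAux.gg φ (x, η x)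
        - TraceAux.PP φ (x, -h) := by
    intro x
    set Q : ℝ → ℝ := fun t => TraceAux.PP φ (x, TraceAux.mfun η h x t)
      + t * (deriv η x * TraceAux.gg φ (x, TraceAux.mfun η h x t)) with hQdef
    have hmc : Continuous (fun t => TraceAux.mfun η h x t) := by
      unfold TraceAux.mfun
      exact (continuous_const.mul continuous_id).add continuous_const
    have hcurve : Continuous (fun t => ((x, TraceAux.mfun η h x t) : ℝ × ℝ)) :=
      continuous_const.prodMk hmc
    have hQc : ContinuousOn Q (Icc 0 1) :=
      ((hPPc.comp hcurve).add
        (continuous_id.mul (continuous_const.mul (hggc.comp hcurve)))).continuousOn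
    have hQd : ∀ t ∈ Ioo (0:ℝ) 1, HasDerivWithinAt Q (TraceAux.GxF η h φ x t) (Ioi t) t := by
      intro t ht
      have hmt : HasDerivAt (fun τ => TraceAux.mfun η h x τ) ((η x + h) * 1) t :=
        ((hasDerivAt_id t).const_mul (η x + h)).add_const (-h)
      have hγ : HasDerivAt (fun τ => ((x, TraceAux.mfun η h x τ) : ℝ × ℝ))
          ((0:ℝ), (η x + h) * 1) t := (hasDerivAt_const t x).prodMk hmt
      have h1 := TraceAux.hasDerivAt_PP_comp hφ hγ
      have h2 := (hasDerivAt_id t).mul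
        ((TraceAux.hasDerivAt_gg_comp hφ hγ).const_mul (deriv η x))
      have hQ' := h1.add h2
      have hy1 : -h < TraceAux.mfun η h x t := by
        unfold TraceAux.mfun; nlinarith [hepos x, ht.1]
      have hy2 : TraceAux.mfun η h x t < η x := by
        unfold TraceAux.mfun; nlinarith [hepos x, ht.2]
      have hsy := TraceAux.q_symm hφ ((x, TraceAux.mfun η h x t) : ℝ × ℝ)
      have hha := hharmq x _ hy1 hy2
      have hQ'' : HasDerivAt Q (TraceAux.GxF η h φ x t) t := by
        refine hQ'.congr_deriv (Eq.symm ?_)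
        simp only [id_eq]
        unfold TraceAux.GxF TraceAux.ppx TraceAux.ppy TraceAux.ggx TraceAux.ggy
        rw [hsy, hha]
        ring
      exact hQ''.hasDerivWithinAt
    have hGxc : Continuous (fun t => TraceAux.GxF η h φ x t) :=
      (TraceAux.cont_Gx hφ hηc hη' h).comp (continuous_const.prodMk continuous_id)
    rw [intervalIntegral.integral_eq_sub_of_hasDeriv_right_of_le zero_le_one hQc hQd
      (hGxc.intervalIntegrable _ _)]
    have hm1 : TraceAux.mfun η h x 1 = η x := by unfold TraceAux.mfun; ring
    have hm0 : TraceAux.mfun η h x 0 = -h := by unfold TraceAux.mfun; ring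
    simp only [hQdef, hm1, hm0]
    ring
  -- the flux function and its derivative
  set f : ℝ → ℝ := fun x => ∫ y in (-h)..(η x), TraceAux.gg φ (x, y) with hfdef
  set w : ℝ → ℝ := fun x => TraceAux.PP φ (x, η x) + deriv η x * TraceAux.gg φ (x, η x)
    - TraceAux.PP φ (x, -h) with hwdef
  have hfeq : f = fun x => ∫ t in (0:ℝ)..1, TraceAux.Gfun η h φ x t := by
    funext x
    simp only [hfdef]
    exact hsub x
  have hfd : ∀ x₀, HasDerivAt f (w x₀) x₀ := by
    intro x₀
    have hGxc := TraceAux.cont_Gx hφ hηc hη' h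
    have hGc := TraceAux.cont_G hφ hηc h
    obtain ⟨M, hM⟩ := (isCompact_Icc.prod isCompact_Icc :
      IsCompact ((Icc (x₀ - 1) (x₀ + 1)) ×ˢ (Icc (0:ℝ) 1))).exists_bound_of_continuousOn
      hGxc.continuousOn
    have key := intervalIntegral.hasDerivAt_integral_of_dominated_loc_of_deriv_le
      (F := fun x t => TraceAux.Gfun η h φ x t) (F' := fun x t => TraceAux.GxF η h φ x t)
      (a := (0:ℝ)) (b := 1) (bound := fun _ => M) (μ := volume) (x₀ := x₀)
      (Metric.ball_mem_nhds x₀ zero_lt_one) ?_ ?_ ?_ ?_ ?_ ?_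
    · have h2 := key.2
      rw [hFTC x₀] at h2
      rw [hfeq, hwdef]
      exact h2
    · exact Filter.Eventually.of_forall fun x =>
        ((hGc.comp (continuous_const.prodMk continuous_id)).aestronglyMeasurable).restrict
    · exact (hGc.comp (continuous_const.prodMk continuous_id)).intervalIntegrable _ _
    · exact ((hGxc.comp (continuous_const.prodMk continuous_id)).aestronglyMeasurable).restrict
    · refine Filter.Eventually.of_forall fun t ht x hx => ?_
      have hxI : x ∈ Icc (x₀ - 1) (x₀ + 1) := by
        rw [Real.ball_eq_Ioo] at hx
        exact Ioo_subset_Icc_self hx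
      have htI : t ∈ Icc (0:ℝ) 1 := by
        rw [uIoc_of_le zero_le_one] at ht
        exact Ioc_subset_Icc_self ht
      simpa using hM (x, t) (mk_mem_prod hxI htI)
    · exact intervalIntegrable_const
    · exact Filter.Eventually.of_forall fun t _ x _ => TraceAux.hasDerivAt_G hφ hηd h t x
  have hfc : Continuous f := by
    have : Differentiable ℝ f := fun x => (hfd x).differentiableAt
    exact this.continuous
  have hwc : Continuous w := by
    rw [hwdef]
    exact (((hPPc.comp hcurveη).add (hη'.mul (hggc.comp hcurveη))).sub
      (hPPc.comp (continuous_id.prodMk continuous_const)))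
  -- periodicity
  have hχL : χ L = χ (-L) := by
    have := hχper (-L)
    rw [show -L + 2*L = L by ring] at this
    exact this
  have hp1per : ∀ x y, TraceAux.p1 φ (x + 2*L, y) = TraceAux.p1 φ (x, y) := by
    intro x y
    rw [← TraceAux.phiX_eq hφ, ← TraceAux.phiX_eq hφ]
    have h1 : (fun x' => φ (x' + 2*L) y) = (fun x' => φ x' y) := funext fun x' => hφper x' y
    have h2 := deriv_comp_add_const (fun x' => φ x' y) (2*L) x
    rw [← h2, h1]
  have hp2per : ∀ x y, TraceAux.p2 φ (x + 2*L, y) = TraceAux.p2 φ (x, y) := by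
    intro x y
    rw [← TraceAux.phiY_eq hφ, ← TraceAux.phiY_eq hφ]
    congr 1
    exact funext fun y' => hφper x y'
  have hgper : ∀ x y, TraceAux.gg φ (x + 2*L, y) = TraceAux.gg φ (x, y) := by
    intro x y
    unfold TraceAux.gg
    rw [hp1per, hp2per]
  have hfL : f L = f (-L) := by
    have hper : f (-L + 2*L) = f (-L) := by
      simp only [hfdef]
      rw [hηper]
      exact intervalIntegral.integral_congr fun y _ => by rw [hgper]
    rw [show -L + 2*L = L by ring] at hper
    exact hper
  -- integration by parts
  have hparts : (∫ x in (-L)..L, χ x * w x) = - ∫ x in (-L)..L, deriv χ x * f x := by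
    have hibp := intervalIntegral.integral_mul_deriv_eq_deriv_mul
      (a := -L) (b := L) (u := χ) (u' := deriv χ) (v := f) (v' := w)
      (fun x _ => (hχ.differentiable one_ne_zero x).hasDerivAt)
      (fun x _ => hfd x)
      (hχ'.intervalIntegrable (-L) L) (hwc.intervalIntegrable (-L) L)
    rw [hibp, hχL, hfL]
    ring
  -- the inner integral
  have hinner : ∀ x, (∫ y in (-h)..(η x), deriv χ x * phiX φ x y * phiY φ x y)
      = deriv χ x * f x := by
    intro x
    simp only [hfdef]
    rw [← intervalIntegral.integral_const_mul]
    refine intervalIntegral.integral_congr fun y _ => ?_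
    rw [hpx, hpy]
    unfold TraceAux.gg
    ring
  -- pointwise algebraic identity
  have hpoint : ∀ x, χ x * (1 + (deriv η x)^2) * (V x)^2
      = χ x * (DN η φ x)^2 + χ x * (phiX φ x (-h))^2 + 2 * (χ x * w x) := by
    intro x
    have hb : TraceAux.p2 φ (x, -h) = 0 := by rw [← hpy]; exact hbot x
    rw [hV]
    unfold DN
    rw [hpx x (η x), hpy x (η x), hpx x (-h)]
    simp only [hwdef]
    unfold TraceAux.PP TraceAux.gg
    rw [hb]
    ring
  -- continuity of the remaining integrands
  have hDNc : Continuous (fun x => DN η φ x) := by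
    have he : (fun x => DN η φ x)
        = fun x => TraceAux.p2 φ (x, η x) - deriv η x * TraceAux.p1 φ (x, η x) := by
      funext x
      unfold DN
      rw [hpx, hpy]
    rw [he]
    exact (hp2c.comp hcurveη).sub (hη'.mul (hp1c.comp hcurveη))
  have hpbc : Continuous (fun x => phiX φ x (-h)) := by
    have he : (fun x => phiX φ x (-h)) = fun x => TraceAux.p1 φ (x, -h) :=
      funext fun x => hpx x (-h)
    rw [he]
    exact hp1c.comp (continuous_id.prodMk continuous_const)
  have i1 : IntervalIntegrable (fun x => χ x * (DN η φ x)^2) volume (-L) L :=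
    (hχc.mul (hDNc.pow 2)).intervalIntegrable _ _
  have i2 : IntervalIntegrable (fun x => χ x * (phiX φ x (-h))^2) volume (-L) L :=
    (hχc.mul (hpbc.pow 2)).intervalIntegrable _ _
  have i3 : IntervalIntegrable (fun x => 2 * (χ x * w x)) volume (-L) L :=
    (continuous_const.mul (hχc.mul hwc)).intervalIntegrable _ _
  have hdouble : (∫ x in (-L)..L, ∫ y in (-h)..(η x), deriv χ x * phiX φ x y * phiY φ x y)
      = ∫ x in (-L)..L, deriv χ x * f x :=
    intervalIntegral.integral_congr fun x _ => hinner x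
  calc (∫ x in (-L)..L, χ x * (1 + (deriv η x)^2) * (V x)^2)
      = ∫ x in (-L)..L, (χ x * (DN η φ x)^2 + χ x * (phiX φ x (-h))^2 + 2 * (χ x * w x)) :=
        intervalIntegral.integral_congr fun x _ => hpoint x
    _ = (∫ x in (-L)..L, χ x * (DN η φ x)^2) + (∫ x in (-L)..L, χ x * (phiX φ x (-h))^2)
        + ∫ x in (-L)..L, 2 * (χ x * w x) := by
        rw [intervalIntegral.integral_add (i1.add i2) i3, intervalIntegral.integral_add i1 i2]
    _ = (∫ x in (-L)..L, χ x * (DN η φ x)^2) + (∫ x in (-L)..L, χ x * (phiX φ x (-h))^2)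
        - 2 * (∫ x in (-L)..L, ∫ y in (-h)..(η x), deriv χ x * phiX φ x y * phiY φ x y) := by
        rw [intervalIntegral.integral_const_mul, hparts, hdouble]
        ring
end
end

section
/- Set ψ(x) = φ(x,η(x)) and G(η)ψ(x) = φ_y(x,η(x)) − η'(x)φ_x(x,η(x)) and assume |η'(x)| ≤ 1 for all x. Then for every C¹ 2L-periodic function χ : ℝ → ℝ with χ ≥ 0, one has ∫_{−L}^{L} χ(x)·ψ'(x)² dx ≤ 8∫_{−L}^{L} χ(x)·(G(η)ψ(x))² dx + 4∫_{−L}^{L} χ(x)·φ_x(x,−h)² dx − 8∫_{−L}^{L}∫_{−h}^{η(x)} χ'(x)·φ_x(x,y)·φ_y(x,y) dy dx. -/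
open Real Set MeasureTheory intervalIntegral

noncomputable section

set_option maxHeartbeats 1000000

lemma sectX_hasDerivAt (f : ℝ × ℝ → ℝ) (hf : ContDiff ℝ 1 f) (x y : ℝ) :
    HasDerivAt (fun x' => f (x', y)) (fderiv ℝ f (x, y) (1, 0)) x :=
  ((hf.differentiable one_ne_zero).differentiableAt.hasFDerivAt).comp_hasDerivAt x
    ((hasDerivAt_id x).prodMk (hasDerivAt_const x y))

lemma sectY_hasDerivAt (f : ℝ × ℝ → ℝ) (hf : ContDiff ℝ 1 f) (x y : ℝ) :
    HasDerivAt (fun y' => f (x, y')) (fderiv ℝ f (x, y) (0, 1)) y :=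
  ((hf.differentiable one_ne_zero).differentiableAt.hasFDerivAt).comp_hasDerivAt y
    ((hasDerivAt_const y x).prodMk (hasDerivAt_id y))

lemma fixed_param_deriv (f : ℝ × ℝ → ℝ) (hf : ContDiff ℝ 1 f) (a c₀ x₀ : ℝ) :
    HasDerivAt (fun x => ∫ y in a..c₀, f (x, y))
      (∫ y in a..c₀, fderiv ℝ f (x₀, y) (1, 0)) x₀ := by
  have hfc : Continuous f := hf.continuous
  have hfx_cont : Continuous fun p : ℝ × ℝ => fderiv ℝ f p (1, 0) :=
    (hf.continuous_fderiv one_ne_zero).clm_apply continuous_const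
  obtain ⟨M, hM⟩ := (isCompact_Icc (a := x₀ - 1) (b := x₀ + 1)).prod
    (isCompact_uIcc (a := a) (b := c₀)) |>.exists_bound_of_continuousOn
    (hfx_cont.continuousOn)
  have hball : Metric.ball x₀ 1 ⊆ Icc (x₀ - 1) (x₀ + 1) := by
    rw [Real.ball_eq_Ioo]; exact Ioo_subset_Icc_self
  refine (intervalIntegral.hasDerivAt_integral_of_dominated_loc_of_deriv_le
    (F := fun x y => f (x, y)) (F' := fun x y => fderiv ℝ f (x, y) (1, 0))
    (μ := volume) (bound := fun _ => M) (Metric.ball_mem_nhds x₀ one_pos) ?_ ?_ ?_ ?_ ?_ ?_).2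
  · exact Filter.Eventually.of_forall fun x =>
      (hfc.comp (continuous_const.prodMk continuous_id)).aestronglyMeasurable
  · exact (hfc.comp (continuous_const.prodMk continuous_id)).intervalIntegrable _ _
  · exact (hfx_cont.comp (continuous_const.prodMk continuous_id)).aestronglyMeasurable
  · exact Filter.Eventually.of_forall fun y hy x hx =>
      hM (x, y) ⟨hball hx, uIoc_subset_uIcc hy⟩
  · exact intervalIntegrable_const
  · exact Filter.Eventually.of_forall fun y _ x _ => sectX_hasDerivAt f hf x y

lemma moving_part (f : ℝ × ℝ → ℝ) (hf : ContDiff ℝ 1 f) (η : ℝ → ℝ) (η' x₀ : ℝ)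
    (hη : HasDerivAt η η' x₀) (hLip : LipschitzWith 1 η) :
    HasDerivAt (fun x => ∫ y in (η x₀)..η x, f (x, y)) (η' * f (x₀, η x₀)) x₀ := by
  have hfc : Continuous f := hf.continuous
  set c₀ := η x₀ with hc₀
  set C := f (x₀, c₀) with hC
  have hint : ∀ x a b : ℝ, IntervalIntegrable (fun y => f (x, y)) volume a b := fun x a b =>
    (hfc.comp (continuous_const.prodMk continuous_id)).intervalIntegrable _ _
  have key : ∀ x, (∫ y in c₀..η x, f (x, y))
      = (η x - c₀) * C + ∫ y in c₀..η x, (f (x, y) - C) := by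
    intro x
    rw [intervalIntegral.integral_sub (hint x _ _) intervalIntegrable_const,
      intervalIntegral.integral_const, smul_eq_mul]
    ring
  have h1 : HasDerivAt (fun x => (η x - c₀) * C) (η' * C) x₀ := (hη.sub_const c₀).mul_const C
  have h2 : HasDerivAt (fun x => ∫ y in c₀..η x, (f (x, y) - C)) 0 x₀ := by
    rw [hasDerivAt_iff_isLittleO]
    have hz : (∫ y in c₀..η x₀, (f (x₀, y) - C)) = 0 := by
      rw [← hc₀, intervalIntegral.integral_same]
    simp only [hz, smul_zero, sub_zero]
    rw [Asymptotics.isLittleO_iff]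
    intro c hc
    obtain ⟨δ, hδ, hδp⟩ := Metric.continuousAt_iff.mp hfc.continuousAt c hc
    filter_upwards [Metric.ball_mem_nhds x₀ (half_pos hδ)] with x hx
    have hxd : |x - x₀| < δ / 2 := by
      have := hx; rwa [Metric.mem_ball, Real.dist_eq] at this
    have hlips : |η x - c₀| ≤ |x - x₀| := by
      have := hLip.dist_le_mul x x₀
      rwa [Real.dist_eq, Real.dist_eq, NNReal.coe_one, one_mul] at this
    have hd : ∀ y ∈ Set.uIoc c₀ (η x), ‖f (x, y) - C‖ ≤ c := by
      intro y hy
      have hyd : |y - c₀| ≤ |η x - c₀| := by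
        rcases Set.mem_uIoc.mp hy with ⟨ha, hb⟩ | ⟨ha, hb⟩ <;>
          rw [abs_le] <;> constructor <;>
          linarith [le_abs_self (η x - c₀), neg_abs_le (η x - c₀), abs_nonneg (η x - c₀)]
      have hdist : dist (x, y) (x₀, c₀) < δ := by
        rw [Prod.dist_eq]
        refine max_lt ?_ ?_ <;> rw [Real.dist_eq] <;> linarith
      have := hδp hdist
      rw [Real.dist_eq] at this
      rw [Real.norm_eq_abs]
      exact (le_of_lt this)
    calc ‖∫ y in c₀..η x, (f (x, y) - C)‖ ≤ c * |η x - c₀| :=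
          intervalIntegral.norm_integral_le_of_norm_le_const hd
      _ ≤ c * ‖x - x₀‖ := by
          rw [Real.norm_eq_abs]; exact mul_le_mul_of_nonneg_left hlips hc.le
  have e : (fun x => ∫ y in c₀..η x, f (x, y))
      = fun x => (η x - c₀) * C + ∫ y in c₀..η x, (f (x, y) - C) := funext key
  rw [show η' * f (x₀, c₀) = η' * C + 0 by rw [← hC]; ring, e]
  exact h1.add h2

lemma hasDerivAt_moving_integral (f : ℝ × ℝ → ℝ) (hf : ContDiff ℝ 1 f)
    (a : ℝ) (η : ℝ → ℝ) (η' x₀ : ℝ) (hη : HasDerivAt η η' x₀) (hLip : LipschitzWith 1 η) :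
    HasDerivAt (fun x => ∫ y in a..η x, f (x, y))
      ((∫ y in a..η x₀, fderiv ℝ f (x₀, y) (1, 0)) + η' * f (x₀, η x₀)) x₀ := by
  have hfc : Continuous f := hf.continuous
  have hint : ∀ x a b : ℝ, IntervalIntegrable (fun y => f (x, y)) volume a b := fun x a b =>
    (hfc.comp (continuous_const.prodMk continuous_id)).intervalIntegrable _ _
  have e : (fun x => ∫ y in a..η x, f (x, y))
      = fun x => (∫ y in a..η x₀, f (x, y)) + ∫ y in (η x₀)..η x, f (x, y) := by
    funext x
    rw [intervalIntegral.integral_add_adjacent_intervals (hint x _ _) (hint x _ _)]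
  rw [e]
  exact (fixed_param_deriv f hf a (η x₀) x₀).add (moving_part f hf η η' x₀ hη hLip)

lemma eval_fderiv_hasFDerivAt (g : ℝ × ℝ → ℝ) (hg : ContDiff ℝ 2 g) (v : ℝ × ℝ) (p : ℝ × ℝ) :
    HasFDerivAt (fun q => fderiv ℝ g q v)
      ((fderiv ℝ (fderiv ℝ g) p).flip v) p := by
  have hD : ContDiff ℝ 1 (fderiv ℝ g) := hg.fderiv_right le_rfl
  have h1 : HasFDerivAt (fderiv ℝ g) (fderiv ℝ (fderiv ℝ g) p) p :=
    (hD.differentiable one_ne_zero).differentiableAt.hasFDerivAt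
  have := h1.clm_apply (hasFDerivAt_const v p)
  simpa using this

lemma clairaut (g : ℝ × ℝ → ℝ) (hg : ContDiff ℝ 2 g) (p : ℝ × ℝ) (v w : ℝ × ℝ) :
    fderiv ℝ (fun q => fderiv ℝ g q v) p w = fderiv ℝ (fun q => fderiv ℝ g q w) p v := by
  have hD : ContDiff ℝ 1 (fderiv ℝ g) := hg.fderiv_right le_rfl
  have h1 : ∀ q, HasFDerivAt g (fderiv ℝ g q) q := fun q =>
    (hg.differentiable (by norm_num)).differentiableAt.hasFDerivAt
  have h2 : HasFDerivAt (fderiv ℝ g) (fderiv ℝ (fderiv ℝ g) p) p :=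
    (hD.differentiable one_ne_zero).differentiableAt.hasFDerivAt
  have hsymm := second_derivative_symmetric h1 h2 v w
  rw [(eval_fderiv_hasFDerivAt g hg v p).fderiv, (eval_fderiv_hasFDerivAt g hg w p).fderiv]
  simpa using hsymm.symm

lemma alg_ineq (a b m c : ℝ) (hm : |m| ≤ 1) (hc : 0 ≤ c) :
    c * (a + m * b) ^ 2
      ≤ 8 * (c * (b - m * a) ^ 2) + 8 * (c * (1/2 * a^2 - 1/2 * b^2 + m * a * b)) := by
  have hm2 : m ^ 2 ≤ 1 := by nlinarith [sq_abs m, abs_nonneg m]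
  have key : 0 ≤ (3 + 8*m^2) * a^2 + (4 - m^2) * b^2 - 10 * (m * a * b) := by
    nlinarith [sq_nonneg ((3 + 8*m^2) * a - 5 * m * b), sq_nonneg b, sq_nonneg (m*b),
      sq_nonneg (m*a - b), sq_nonneg (m*a + b), sq_nonneg a, mul_nonneg (sub_nonneg.2 hm2) (sq_nonneg b)]
  nlinarith [mul_nonneg hc key]

lemma phiX_eq (φ : ℝ → ℝ → ℝ) (hφ : ContDiff ℝ 2 (Function.uncurry φ)) (x y : ℝ) :
    phiX φ x y = fderiv ℝ (Function.uncurry φ) (x, y) (1, 0) :=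
  (sectX_hasDerivAt _ (hφ.of_le one_le_two) x y).deriv

lemma phiY_eq (φ : ℝ → ℝ → ℝ) (hφ : ContDiff ℝ 2 (Function.uncurry φ)) (x y : ℝ) :
    phiY φ x y = fderiv ℝ (Function.uncurry φ) (x, y) (0, 1) :=
  (sectY_hasDerivAt _ (hφ.of_le one_le_two) x y).deriv

lemma periodic_deriv' (k : ℝ → ℝ) (c : ℝ) (hk : ∀ x, k (x + c) = k x) (x : ℝ) :
    deriv k (x + c) = deriv k x := by
  rw [← deriv_comp_add_const k c x]
  congr 1
  exact funext hk

/-- the trace inequality (d11) of the paper, bounding `ψₓ` by `G(η)ψ`. -/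
theorem trace_inequality
    (L h : ℝ) (hL : 0 < L) (hh : 0 < h)
    (η : ℝ → ℝ) (hη : ContDiff ℝ 2 η) (hηper : ∀ x, η (x + 2*L) = η x)
    (hηeven : ∀ x, η (-x) = η x) (hηlb : ∀ x, -h/2 ≤ η x)
    (hslope : ∀ x, |deriv η x| ≤ 1)
    (φ : ℝ → ℝ → ℝ) (hφ : ContDiff ℝ 2 (Function.uncurry φ))
    (hφper : ∀ x y, φ (x + 2*L) y = φ x y) (hφeven : ∀ x y, φ (-x) y = φ x y)
    (hharm : ∀ x y : ℝ, -h < y → y < η x →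
        deriv (fun x' => phiX φ x' y) x + deriv (fun y' => phiY φ x y') y = 0)
    (hbot : ∀ x : ℝ, phiY φ x (-h) = 0)
    (ψ : ℝ → ℝ) (hψ : ∀ x, ψ x = φ x (η x))
    (χ : ℝ → ℝ) (hχ : ContDiff ℝ 1 χ) (hχper : ∀ x, χ (x + 2*L) = χ x)
    (hχpos : ∀ x, 0 ≤ χ x) :
    (∫ x in (-L)..L, χ x * (deriv ψ x)^2)
    ≤ 8 * (∫ x in (-L)..L, χ x * (DN η φ x)^2)
      + 4 * (∫ x in (-L)..L, χ x * (phiX φ x (-h))^2)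
      - 8 * (∫ x in (-L)..L, ∫ y in (-h)..(η x), deriv χ x * phiX φ x y * phiY φ x y) := by
  set Φ := Function.uncurry φ with hΦdef
  have hΦ : ContDiff ℝ 2 Φ := hφ
  set uc : ℝ × ℝ → ℝ := fun p => fderiv ℝ Φ p (1, 0) with huc_def
  set vc : ℝ × ℝ → ℝ := fun p => fderiv ℝ Φ p (0, 1) with hvc_def
  have huc : ContDiff ℝ 1 uc := (hΦ.fderiv_right le_rfl).clm_apply contDiff_const
  have hvc : ContDiff ℝ 1 vc := (hΦ.fderiv_right le_rfl).clm_apply contDiff_const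
  have ePX : ∀ x y, phiX φ x y = uc (x, y) := fun x y => phiX_eq φ hφ x y
  have ePY : ∀ x y, phiY φ x y = vc (x, y) := fun x y => phiY_eq φ hφ x y
  set f : ℝ × ℝ → ℝ := fun p => uc p * vc p with hf_def
  have hf : ContDiff ℝ 1 f := huc.mul hvc
  -- basic continuity facts
  have cη : Continuous η := hη.continuous
  have cη' : Continuous (deriv η) := hη.continuous_deriv one_le_two
  have cχ' : Continuous (deriv χ) := hχ.continuous_deriv le_rfl
  have cuc : Continuous uc := huc.continuous
  have cvc : Continuous vc := hvc.continuous
  have csurf : Continuous fun x : ℝ => (x, η x) := continuous_id.prodMk cη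
  have cbot : Continuous fun x : ℝ => (x, -h) := continuous_id.prodMk continuous_const
  -- derivative facts for η
  have hηd : ∀ x, HasDerivAt η (deriv η x) x :=
    fun x => (hη.differentiable two_ne_zero).differentiableAt.hasDerivAt
  have hLip : LipschitzWith 1 η := by
    apply lipschitzWith_of_nnnorm_deriv_le (hη.differentiable two_ne_zero)
    intro x
    have := hslope x
    rw [← NNReal.coe_le_coe]
    simpa [Real.norm_eq_abs] using this
  -- the bulk function F
  set F : ℝ → ℝ := fun x => ∫ y in (-h)..η x, f (x, y) with hF_def
  have hηgt : ∀ x, -h < η x := fun x => lt_of_lt_of_le (by linarith) (hηlb x)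
  -- derivative of F
  have hFd : ∀ x₀, HasDerivAt F (NOp η φ x₀ - 1/2 * (phiX φ x₀ (-h))^2) x₀ := by
    intro x₀
    have h0 := hasDerivAt_moving_integral f hf (-h) η (deriv η x₀) x₀ (hηd x₀) hLip
    set W : ℝ → ℝ := fun y => uc (x₀, y) * fderiv ℝ uc (x₀, y) (0, 1)
      - vc (x₀, y) * fderiv ℝ vc (x₀, y) (0, 1) with hW_def
    have c0 : Continuous fun y : ℝ => ((x₀ : ℝ), y) := continuous_const.prodMk continuous_id
    have cfu : Continuous fun p : ℝ × ℝ => fderiv ℝ uc p (0, 1) :=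
      (huc.continuous_fderiv one_ne_zero).clm_apply continuous_const
    have cfv : Continuous fun p : ℝ × ℝ => fderiv ℝ vc p (0, 1) :=
      (hvc.continuous_fderiv one_ne_zero).clm_apply continuous_const
    have cW : Continuous W :=
      ((cuc.comp c0).mul (cfu.comp c0)).sub ((cvc.comp c0).mul (cfv.comp c0))
    have hne : ∀ᵐ (y : ℝ), y ≠ η x₀ := by
      have : {y : ℝ | ¬ y ≠ η x₀} = {η x₀} := by ext y; simp
      rw [MeasureTheory.ae_iff, this]
      exact measure_singleton _
    have step1 : (∫ y in (-h)..η x₀, fderiv ℝ f (x₀, y) (1, 0)) = ∫ y in (-h)..η x₀, W y := by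
      apply intervalIntegral.integral_congr_ae
      filter_upwards [hne] with y hy hyI
      rw [uIoc_of_le (hηgt x₀).le] at hyI
      obtain ⟨hy1, hy2⟩ := hyI
      have hylt : y < η x₀ := lt_of_le_of_ne hy2 hy
      have hpx : HasDerivAt (fun x => f (x, y)) (fderiv ℝ f (x₀, y) (1, 0)) x₀ :=
        sectX_hasDerivAt f hf x₀ y
      have hux : HasDerivAt (fun x => uc (x, y)) (fderiv ℝ uc (x₀, y) (1, 0)) x₀ :=
        sectX_hasDerivAt uc huc x₀ y
      have hvx : HasDerivAt (fun x => vc (x, y)) (fderiv ℝ vc (x₀, y) (1, 0)) x₀ :=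
        sectX_hasDerivAt vc hvc x₀ y
      have euniq : fderiv ℝ f (x₀, y) (1, 0)
          = fderiv ℝ uc (x₀, y) (1, 0) * vc (x₀, y) + uc (x₀, y) * fderiv ℝ vc (x₀, y) (1, 0) :=
        hpx.unique (hux.mul hvx)
      have hharm' := hharm x₀ y hy1 hylt
      have e1 : deriv (fun x' => phiX φ x' y) x₀ = fderiv ℝ uc (x₀, y) (1, 0) := by
        have e : (fun x' => phiX φ x' y) = fun x' => uc (x', y) := funext fun x' => ePX x' y
        rw [e]; exact (sectX_hasDerivAt uc huc x₀ y).deriv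
      have e2 : deriv (fun y' => phiY φ x₀ y') y = fderiv ℝ vc (x₀, y) (0, 1) := by
        have e : (fun y' => phiY φ x₀ y') = fun y' => vc (x₀, y') := funext fun y' => ePY x₀ y'
        rw [e]; exact (sectY_hasDerivAt vc hvc x₀ y).deriv
      rw [e1, e2] at hharm'
      have hcl : fderiv ℝ vc (x₀, y) (1, 0) = fderiv ℝ uc (x₀, y) (0, 1) :=
        clairaut Φ hΦ (x₀, y) (0, 1) (1, 0)
      have hux_eq : fderiv ℝ uc (x₀, y) (1, 0) = - fderiv ℝ vc (x₀, y) (0, 1) := by linarith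
      rw [euniq, hcl, hux_eq, hW_def]
      ring
    have hG : ∀ y, HasDerivAt (fun y' => 1/2 * uc (x₀, y') ^ 2 - 1/2 * vc (x₀, y') ^ 2) (W y) y := by
      intro y
      have hu := sectY_hasDerivAt uc huc x₀ y
      have hv := sectY_hasDerivAt vc hvc x₀ y
      have hd := ((hu.mul hu).const_mul (1/2 : ℝ)).sub ((hv.mul hv).const_mul (1/2 : ℝ))
      have e : (fun y' => 1/2 * uc (x₀, y') ^ 2 - 1/2 * vc (x₀, y') ^ 2)
          = fun y' => 1/2 * (uc (x₀, y') * uc (x₀, y')) - 1/2 * (vc (x₀, y') * vc (x₀, y')) := by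
        funext y'; ring
      rw [e]
      exact hd.congr_deriv (by simp only [hW_def]; ring)
    have step2 : (∫ y in (-h)..η x₀, W y)
        = (1/2 * uc (x₀, η x₀) ^ 2 - 1/2 * vc (x₀, η x₀) ^ 2)
          - (1/2 * uc (x₀, -h) ^ 2 - 1/2 * vc (x₀, -h) ^ 2) :=
      intervalIntegral.integral_eq_sub_of_hasDerivAt (fun y _ => hG y)
        (cW.intervalIntegrable _ _)
    have hb0 : vc (x₀, -h) = 0 := by rw [← ePY]; exact hbot x₀
    have eval : (∫ y in (-h)..η x₀, fderiv ℝ f (x₀, y) (1, 0)) + deriv η x₀ * f (x₀, η x₀)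
        = NOp η φ x₀ - 1/2 * (phiX φ x₀ (-h))^2 := by
      rw [step1, step2]
      simp only [NOp, ePX, ePY, hb0]
      ring
    rw [← eval]
    exact h0
  -- continuity and periodicity of F
  have FC : Continuous F := by
    have hd : Differentiable ℝ F := fun x => (hFd x).differentiableAt
    exact hd.continuous
  have fper : ∀ x y, f (x + 2*L, y) = f (x, y) := by
    intro x y
    have hu : uc (x + 2*L, y) = uc (x, y) := by
      rw [← ePX, ← ePX]
      exact periodic_deriv' (fun x' => φ x' y) (2*L) (fun x' => hφper x' y) x
    have hv : vc (x + 2*L, y) = vc (x, y) := by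
      rw [← ePY, ← ePY]
      have e : (fun y' => φ (x + 2*L) y') = fun y' => φ x y' := funext fun y' => hφper x y'
      simp only [phiY, e]
    simp only [hf_def, hu, hv]
  have Fper : ∀ x, F (x + 2*L) = F x := by
    intro x
    simp only [hF_def]
    rw [hηper x]
    exact intervalIntegral.integral_congr fun y _ => fper x y
  -- FTC for χ · F
  have hχd : ∀ x, HasDerivAt χ (deriv χ x) x :=
    fun x => (hχ.differentiable one_ne_zero).differentiableAt.hasDerivAt
  set H : ℝ → ℝ := fun x => χ x * F x with hH_def
  have hHd : ∀ x, HasDerivAt H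
      (deriv χ x * F x + χ x * (NOp η φ x - 1/2 * (phiX φ x (-h))^2)) x :=
    fun x => (hχd x).mul (hFd x)
  have cucs : Continuous fun x => uc (x, η x) := cuc.comp csurf
  have cvcs : Continuous fun x => vc (x, η x) := cvc.comp csurf
  have cub : Continuous fun x => uc (x, -h) := cuc.comp cbot
  have eNOp : NOp η φ = fun x => 1/2 * uc (x, η x)^2 - 1/2 * vc (x, η x)^2
      + deriv η x * uc (x, η x) * vc (x, η x) := funext fun x => by simp only [NOp, ePX, ePY]
  have cNOp : Continuous (NOp η φ) := by
    rw [eNOp]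
    exact ((continuous_const.mul (cucs.pow 2)).sub (continuous_const.mul (cvcs.pow 2))).add
      ((cη'.mul cucs).mul cvcs)
  have ebot : (fun x => phiX φ x (-h)) = fun x => uc (x, -h) := funext fun x => ePX x (-h)
  have cPXb : Continuous fun x => phiX φ x (-h) := by rw [ebot]; exact cub
  have cH' : Continuous fun x => deriv χ x * F x
      + χ x * (NOp η φ x - 1/2 * (phiX φ x (-h))^2) :=
    (cχ'.mul FC).add (hχ.continuous.mul (cNOp.sub (continuous_const.mul (cPXb.pow 2))))
  have key0 : (∫ x in (-L)..L, (deriv χ x * F x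
      + χ x * (NOp η φ x - 1/2 * (phiX φ x (-h))^2))) = H L - H (-L) :=
    intervalIntegral.integral_eq_sub_of_hasDerivAt (fun x _ => hHd x)
      (cH'.intervalIntegrable _ _)
  have hHper : H L = H (-L) := by
    have e1 := hχper (-L)
    have e2 := Fper (-L)
    rw [show -L + 2*L = L by ring] at e1 e2
    simp only [hH_def, e1, e2]
  have i1 : IntervalIntegrable (fun x => deriv χ x * F x) volume (-L) L :=
    (cχ'.mul FC).intervalIntegrable _ _
  have i2 : IntervalIntegrable (fun x => χ x * (NOp η φ x - 1/2 * (phiX φ x (-h))^2))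
      volume (-L) L :=
    (hχ.continuous.mul (cNOp.sub (continuous_const.mul (cPXb.pow 2)))).intervalIntegrable _ _
  have key1 : (∫ x in (-L)..L, deriv χ x * F x)
      + (∫ x in (-L)..L, χ x * (NOp η φ x - 1/2 * (phiX φ x (-h))^2)) = 0 := by
    rw [← intervalIntegral.integral_add i1 i2, key0, hHper]
    ring
  have i3 : IntervalIntegrable (fun x => χ x * NOp η φ x) volume (-L) L :=
    (hχ.continuous.mul cNOp).intervalIntegrable _ _
  have i4 : IntervalIntegrable (fun x => χ x * (phiX φ x (-h))^2) volume (-L) L :=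
    (hχ.continuous.mul (cPXb.pow 2)).intervalIntegrable _ _
  have split2 : (∫ x in (-L)..L, χ x * (NOp η φ x - 1/2 * (phiX φ x (-h))^2))
      = (∫ x in (-L)..L, χ x * NOp η φ x)
        - 1/2 * ∫ x in (-L)..L, χ x * (phiX φ x (-h))^2 := by
    have e : (∫ x in (-L)..L, χ x * (NOp η φ x - 1/2 * (phiX φ x (-h))^2))
        = ∫ x in (-L)..L, (χ x * NOp η φ x - 1/2 * (χ x * (phiX φ x (-h))^2)) :=
      intervalIntegral.integral_congr fun x _ => by ring
    rw [e, intervalIntegral.integral_sub i3 ((i4.const_mul (1/2 : ℝ))),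
      intervalIntegral.integral_const_mul]
  -- identification of the double integral
  have eID : (∫ x in (-L)..L, ∫ y in (-h)..(η x), deriv χ x * phiX φ x y * phiY φ x y)
      = ∫ x in (-L)..L, deriv χ x * F x := by
    apply intervalIntegral.integral_congr
    intro x _
    calc (∫ y in (-h)..η x, deriv χ x * phiX φ x y * phiY φ x y)
        = ∫ y in (-h)..η x, deriv χ x * f (x, y) :=
          intervalIntegral.integral_congr fun y _ => by simp only [hf_def, ePX, ePY]; ring
      _ = deriv χ x * ∫ y in (-h)..η x, f (x, y) := intervalIntegral.integral_const_mul _ _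
      _ = deriv χ x * F x := by rw [hF_def]
  -- derivative of ψ
  have eψd : deriv ψ = fun x => uc (x, η x) + deriv η x * vc (x, η x) := by
    funext x
    have hcurve : HasDerivAt (fun x' : ℝ => (x', η x')) (1, deriv η x) x :=
      (hasDerivAt_id x).prodMk (hηd x)
    have hcm := ((hΦ.differentiable two_ne_zero).differentiableAt.hasFDerivAt).comp_hasDerivAt
      x hcurve
    have hψx : HasDerivAt ψ (fderiv ℝ Φ (x, η x) (1, deriv η x)) x := by
      apply hcm.congr_of_eventuallyEq
      exact Filter.Eventually.of_forall fun x' => hψ x'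
    have e : fderiv ℝ Φ (x, η x) (1, deriv η x) = uc (x, η x) + deriv η x * vc (x, η x) := by
      have ev : ((1:ℝ), deriv η x) = ((1:ℝ), (0:ℝ)) + deriv η x • ((0:ℝ), (1:ℝ)) := by
        simp [Prod.ext_iff]
      rw [ev, map_add, ContinuousLinearMap.map_smul, smul_eq_mul]
    rw [← e]
    exact hψx.deriv
  have cψ' : Continuous (deriv ψ) := by rw [eψd]; exact cucs.add (cη'.mul cvcs)
  have eDN : DN η φ = fun x => vc (x, η x) - deriv η x * uc (x, η x) :=
    funext fun x => by simp only [DN, ePX, ePY]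
  have cDN : Continuous (DN η φ) := by rw [eDN]; exact cvcs.sub (cη'.mul cucs)
  -- pointwise inequality and integration
  have hptwise : ∀ x ∈ Icc (-L) L,
      χ x * (deriv ψ x)^2 ≤ 8 * (χ x * (DN η φ x)^2) + 8 * (χ x * NOp η φ x) := by
    intro x _
    have halg := alg_ineq (uc (x, η x)) (vc (x, η x)) (deriv η x) (χ x) (hslope x) (hχpos x)
    simp only [eψd, eDN, eNOp]
    convert halg using 3 <;> ring
  have hmono : (∫ x in (-L)..L, χ x * (deriv ψ x)^2)
      ≤ ∫ x in (-L)..L, (8 * (χ x * (DN η φ x)^2) + 8 * (χ x * NOp η φ x)) :=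
    intervalIntegral.integral_mono_on (by linarith)
      ((hχ.continuous.mul (cψ'.pow 2)).intervalIntegrable _ _)
      (((continuous_const.mul (hχ.continuous.mul (cDN.pow 2))).add
        (continuous_const.mul (hχ.continuous.mul cNOp))).intervalIntegrable _ _) hptwise
  have hsplit : (∫ x in (-L)..L, (8 * (χ x * (DN η φ x)^2) + 8 * (χ x * NOp η φ x)))
      = 8 * (∫ x in (-L)..L, χ x * (DN η φ x)^2) + 8 * (∫ x in (-L)..L, χ x * NOp η φ x) := by
    rw [intervalIntegral.integral_add
        ((show IntervalIntegrable (fun x => χ x * DN η φ x ^ 2) volume (-L) L from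
          (hχ.continuous.mul (cDN.pow 2)).intervalIntegrable (μ := volume) (-L) L).const_mul 8)
        ((i3).const_mul 8),
      intervalIntegral.integral_const_mul, intervalIntegral.integral_const_mul]
  rw [eID]
  linarith [hmono, hsplit, key1, split2, eID]
end
end
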